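/- Let d, d' : ℕ, and let ℓ : Fin (2^d) → α and ℓ' : Fin (2^{d'}) → α be two batches (the current batch and a previous legal batch respectively). If some element e occurs in both batches, then there exist indices i and j and membership proofs such that one proof verifies e at position i against mroot d ℓ and the other verifies e at position j against mroot d' ℓ'. (Evidence for the Integrity 2 fraud-proof: a violation of the history property — a transaction request of the current batch already appears in a previous batch — can always be exhibited by two verifying Merkle membership proofs against the two posted roots.) -/
import Mathlib


variable {α β : Type*}

/-- First half of a family of `2^(d+1)` leaves. -/
def half0 {d : ℕ} (ℓ : Fin (2 ^ (d + 1)) → α) : Fin (2 ^ d) → α :=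
  fun i => ℓ ⟨i.val, by
    have hi := i.isLt
    have h2 : 2 ^ (d + 1) = 2 ^ d + 2 ^ d := by rw [pow_succ]; ring
    omega⟩

/-- Second half of a family of `2^(d+1)` leaves. -/
def half1 {d : ℕ} (ℓ : Fin (2 ^ (d + 1)) → α) : Fin (2 ^ d) → α :=
  fun i => ℓ ⟨2 ^ d + i.val, by
    have hi := i.isLt
    have h2 : 2 ^ (d + 1) = 2 ^ d + 2 ^ d := by rw [pow_succ]; ring
    omega⟩

/-- Merkle root of a family of `2^d` leaves, with leaf hash `h` and node combiner `H`. -/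
def mroot (h : α → β) (H : β → β → β) : (d : ℕ) → (Fin (2 ^ d) → α) → β
  | 0, ℓ => h (ℓ ⟨0, by positivity⟩)
  | d + 1, ℓ => H (mroot h H d (half0 ℓ)) (mroot h H d (half1 ℓ))

/-- Verification fold of a membership proof `π` (a vector of `d` hashes) for element `e`
at position `i`: `v 0 = h e`, and `v (k+1) = H (π k) (v k)` if the `k`-th bit of `i` is 1,
else `v (k+1) = H (v k) (π k)`. -/
def vfold (h : α → β) (H : β → β → β) (e : α) (i : ℕ) {d : ℕ} (π : Fin d → β) : ℕ → β
  | 0 => h e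
  | k + 1 =>
    if hk : k < d then
      if i.testBit k then H (π ⟨k, hk⟩) (vfold h H e i π k)
      else H (vfold h H e i π k) (π ⟨k, hk⟩)
    else vfold h H e i π k

/-- The membership proof `π` verifies element `e` at position `i` against root `r`. -/
def Verifies (h : α → β) (H : β → β → β) {d : ℕ} (π : Fin d → β) (e : α)
    (i : Fin (2 ^ d)) (r : β) : Prop :=
  vfold h H e i.val π d = r



lemma vfold_eq_of_agree (h : α → β) (H : β → β → β) (e : α) {d d' : ℕ}
    (π : Fin d → β) (π' : Fin d' → β) (i i' : ℕ) :
    ∀ k, ∀ (hk : k ≤ d) (hk' : k ≤ d'),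
      (∀ j : ℕ, (hj : j < k) → π ⟨j, by omega⟩ = π' ⟨j, by omega⟩) →
      (∀ j < k, i.testBit j = i'.testBit j) →
      vfold h H e i π k = vfold h H e i' π' k := by
  intro k
  induction k with
  | zero => intro _ _ _ _; rfl
  | succ k ih =>
    intro hk hk' hπ hbit
    have hlt : k < d := by omega
    have hlt' : k < d' := by omega
    have hrec := ih (by omega) (by omega) (fun j hj => hπ j (by omega))
      (fun j hj => hbit j (by omega))
    simp only [vfold, dif_pos hlt, dif_pos hlt', hbit k (by omega), hrec,
      hπ k (by omega)]

lemma exists_vfold (h : α → β) (H : β → β → β) :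
    ∀ (d : ℕ) (ℓ : Fin (2 ^ d) → α) (i : Fin (2 ^ d)),
      ∃ π : Fin d → β, vfold h H (ℓ i) i.val π d = mroot h H d ℓ := by
  intro d
  induction d with
  | zero =>
    intro ℓ i
    refine ⟨Fin.elim0, ?_⟩
    have : i = ⟨0, by norm_num⟩ := by
      ext; have := i.isLt; omega
    rw [this]; rfl
  | succ d ih =>
    intro ℓ i
    have h2 : 2 ^ (d + 1) = 2 ^ d + 2 ^ d := by rw [pow_succ]; ring
    by_cases hi : i.val < 2 ^ d
    · obtain ⟨π, hπ⟩ := ih (half0 ℓ) ⟨i.val, hi⟩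
      set x := mroot h H d (half1 ℓ) with hx
      set π' : Fin (d + 1) → β :=
        fun k => if hk : k.val < d then π ⟨k.val, hk⟩ else x with hπ'def
      refine ⟨π', ?_⟩
      have hbit : i.val.testBit d = false := Nat.testBit_eq_false_of_lt hi
      have hleaf : half0 ℓ ⟨i.val, hi⟩ = ℓ i := by
        simp only [half0]
      have hagree : vfold h H (ℓ i) i.val π' d
          = vfold h H (half0 ℓ ⟨i.val, hi⟩) i.val π d := by
        rw [hleaf]
        exact vfold_eq_of_agree h H (ℓ i) π' π i.val i.val d (Nat.le_succ d)
          (le_refl d) (fun j hj => by simp [hπ'def, hj]) (fun j _ => rfl)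
      have hlast : π' ⟨d, Nat.lt_succ_self d⟩ = x := by
        simp [hπ'def]
      show vfold h H (ℓ i) i.val π' (d + 1) = _
      rw [vfold, dif_pos (Nat.lt_succ_self d), hbit]
      simp only [Bool.false_eq_true, if_false, hagree, hπ, hlast]
      rfl
    · have hj : i.val - 2 ^ d < 2 ^ d := by have := i.isLt; omega
      have hval : i.val = 2 ^ d + (i.val - 2 ^ d) := by omega
      obtain ⟨π, hπ⟩ := ih (half1 ℓ) ⟨i.val - 2 ^ d, hj⟩
      set x := mroot h H d (half0 ℓ) with hx
      set π' : Fin (d + 1) → β :=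
        fun k => if hk : k.val < d then π ⟨k.val, hk⟩ else x with hπ'def
      refine ⟨π', ?_⟩
      have hbit : i.val.testBit d = true := by
        rw [hval, Nat.testBit_two_pow_add_eq, Nat.testBit_eq_false_of_lt hj]; rfl
      have hleaf : half1 ℓ ⟨i.val - 2 ^ d, hj⟩ = ℓ i := by
        simp only [half1]; congr 1; ext; simp; omega
      have hagree : vfold h H (ℓ i) i.val π' d
          = vfold h H (half1 ℓ ⟨i.val - 2 ^ d, hj⟩) (i.val - 2 ^ d) π d := by
        rw [hleaf]
        refine vfold_eq_of_agree h H (ℓ i) π' π i.val (i.val - 2 ^ d) d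
          (Nat.le_succ d) (le_refl d) (fun j hj' => by simp [hπ'def, hj'])
          (fun j hjd => ?_)
        conv_lhs => rw [hval]
        exact Nat.testBit_two_pow_add_gt hjd _
      have hlast : π' ⟨d, Nat.lt_succ_self d⟩ = x := by
        simp [hπ'def]
      show vfold h H (ℓ i) i.val π' (d + 1) = _
      rw [vfold, dif_pos (Nat.lt_succ_self d), hbit]
      simp only [if_true, hagree, hπ, hlast]
      rfl

/-- Evidence for the Integrity 2 fraud-proof: an element occurring both in the current
batch and in a previous batch can be exhibited by two verifying Merkle membership proofs
against the two posted roots. -/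
theorem integrity2_evidence (h : α → β) (H : β → β → β)
    {d d' : ℕ} (ℓ : Fin (2 ^ d) → α) (ℓ' : Fin (2 ^ d') → α) (e : α)
    (he : (∃ i, ℓ i = e) ∧ (∃ j, ℓ' j = e)) :
    ∃ (i : Fin (2 ^ d)) (j : Fin (2 ^ d')) (π : Fin d → β) (π' : Fin d' → β),
      Verifies h H π e i (mroot h H d ℓ) ∧ Verifies h H π' e j (mroot h H d' ℓ') := by
  obtain ⟨⟨i, hi⟩, ⟨j, hj⟩⟩ := he
  obtain ⟨π, hπ⟩ := exists_vfold h H d ℓ i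
  obtain ⟨π', hπ'⟩ := exists_vfold h H d' ℓ' j
  exact ⟨i, j, π, π', by rwa [← hi], by rwa [← hj]⟩
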